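/- arXiv:2603.25798 — 3 statements merged into one kernel-verified Lean document; each statement's English description precedes it below -/
import Mathlib

section
/- For every class c with c < C and every spatial location (x, y), define the Grad-CAM weight α^c_k = (1/Z) · Σ_{i<m} Σ_{j<n} D(Y^c)(A)(e_{k,i,j}), where D(Y^c)(A) denotes the Fréchet derivative of the map A ↦ Y^c(A) at the point A and e_{k,i,j} is the standard basis element of the product space (the function that is 1 at coordinate (k,i,j) and 0 elsewhere), and define the Grad-CAM saliency value at (x,y) as ReLU(Σ_{k<K} α^c_k · A k x y). Then this Grad-CAM saliency value equals the average of the R penultimate feature maps assigned to class c: ReLU(Σ_{k<K} α^c_k · A k x y) = (1/R) · Σ_{k<K, ⌊k/R⌋ = c} A k x y. -/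
/-- Theorem 1, Grad-CAM equivalence:
For every class `c < C` and spatial location `(x, y)`, with Grad-CAM weights
`α^c_k = (1/Z) · Σ_{i,j} D(Y^c)(A)(e_{k,i,j})` defined via the Fréchet derivative
of the 3D global average pooling pre-logit `Y^c` at `A`, the Grad-CAM saliency
`ReLU(Σ_k α^c_k · A k x y)` equals the plain average of the `R` penultimate
feature maps assigned to class `c`. -/
theorem facnn_gradcam_equivalence
    (C R m n : ℕ) (hC : 1 ≤ C) (hR : 1 ≤ R) (hm : 1 ≤ m) (hn : 1 ≤ n)
    (K : ℕ) (hK : K = C * R) (Z : ℕ) (hZ : Z = m * n)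
    (A : Fin K → Fin m → Fin n → ℝ)
    (hA : ∀ k x y, 0 ≤ A k x y)
    (Y : ℕ → (Fin K → Fin m → Fin n → ℝ) → ℝ)
    (hY : ∀ c (B : Fin K → Fin m → Fin n → ℝ),
      Y c B = (1 / (R : ℝ)) *
        ∑ k ∈ Finset.univ.filter (fun k : Fin K => (k : ℕ) / R = c),
          ∑ x : Fin m, ∑ y : Fin n, B k x y)
    (e : Fin K → Fin m → Fin n → (Fin K → Fin m → Fin n → ℝ))
    (he : ∀ k i j, e k i j =
      fun k' i' j' => if k' = k ∧ i' = i ∧ j' = j then (1 : ℝ) else 0)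
    (α : ℕ → Fin K → ℝ)
    (hα : ∀ c k, α c k = (1 / (Z : ℝ)) *
      ∑ i : Fin m, ∑ j : Fin n, fderiv ℝ (Y c) A (e k i j))
    (c : ℕ) (hc : c < C) (x : Fin m) (y : Fin n) :
    max 0 (∑ k : Fin K, α c k * A k x y) =
      (1 / (R : ℝ)) *
        ∑ k ∈ Finset.univ.filter (fun k : Fin K => (k : ℕ) / R = c),
          A k x y := by
  -- The linear map underlying `Y c`
  set S := Finset.univ.filter (fun k : Fin K => (k : ℕ) / R = c) with hS
  let L : (Fin K → Fin m → Fin n → ℝ) →ₗ[ℝ] ℝ :=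
    { toFun := fun B => (1 / (R : ℝ)) * ∑ k ∈ S, ∑ x : Fin m, ∑ y : Fin n, B k x y
      map_add' := by
        intro B₁ B₂
        simp [Finset.sum_add_distrib, mul_add]
      map_smul' := by
        intro r B
        simp only [Pi.smul_apply, smul_eq_mul, Finset.mul_sum]
        exact Finset.sum_congr rfl fun _ _ => Finset.sum_congr rfl fun _ _ =>
          Finset.sum_congr rfl fun _ _ => by simp only [RingHom.id_apply]; ring }
  have hYL : Y c = L.toContinuousLinearMap := by
    funext B; rw [hY c B]; rfl
  have hfd : fderiv ℝ (Y c) A = L.toContinuousLinearMap := by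
    rw [hYL]; exact (L.toContinuousLinearMap.hasFDerivAt).fderiv
  -- value of the derivative on basis vectors
  have hval : ∀ k : Fin K, ∀ i : Fin m, ∀ j : Fin n,
      fderiv ℝ (Y c) A (e k i j) =
        if (k : ℕ) / R = c then (1 / (R : ℝ)) else 0 := by
    intro k i j
    rw [hfd]
    have : (L.toContinuousLinearMap : (Fin K → Fin m → Fin n → ℝ) → ℝ) (e k i j)
        = (1 / (R : ℝ)) * ∑ k' ∈ S, ∑ x' : Fin m, ∑ y' : Fin n, e k i j k' x' y' := rfl
    rw [this, he]
    have hinner : ∀ k' : Fin K,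
        (∑ x' : Fin m, ∑ y' : Fin n,
          (if k' = k ∧ x' = i ∧ y' = j then (1 : ℝ) else 0)) =
        if k' = k then 1 else 0 := by
      intro k'
      by_cases hk : k' = k
      · subst hk
        simp [ite_and, Finset.sum_ite_eq']
      · simp [hk]
    simp only [hinner]
    rw [Finset.sum_ite_eq' S k (fun _ => (1 : ℝ))]
    by_cases hkS : (k : ℕ) / R = c
    · have : k ∈ S := by simp [hS, hkS]
      simp [this, hkS]
    · have : k ∉ S := by simp [hS, hkS]
      simp [this, hkS]
  -- simplify α
  have hZ0 : (Z : ℝ) ≠ 0 := by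
    have : 0 < Z := by rw [hZ]; positivity
    exact_mod_cast this.ne'
  have hαval : ∀ k : Fin K, α c k =
      if (k : ℕ) / R = c then (1 / (R : ℝ)) else 0 := by
    intro k
    rw [hα]
    simp only [hval]
    by_cases hkc : (k : ℕ) / R = c
    · simp only [hkc, if_true]
      rw [Finset.sum_const, Finset.sum_const]
      simp only [smul_eq_mul, Finset.card_univ, Fintype.card_fin, nsmul_eq_mul]
      have hm0 : (m : ℝ) ≠ 0 := by positivity
      have hn0 : (n : ℝ) ≠ 0 := by positivity
      rw [hZ]
      push_cast
      field_simp
    · simp [hkc]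
  have hsum : (∑ k : Fin K, α c k * A k x y) =
      (1 / (R : ℝ)) * ∑ k ∈ S, A k x y := by
    rw [Finset.mul_sum, hS, Finset.sum_filter]
    apply Finset.sum_congr rfl
    intro k _
    rw [hαval k]
    by_cases hkc : (k : ℕ) / R = c <;> simp [hkc]
  rw [hsum]
  apply max_eq_right
  apply mul_nonneg (by positivity)
  exact Finset.sum_nonneg fun k _ => hA k x y
end

section
/- For every L with 1 ≤ L ≤ N, the rescaled features satisfy the bounded increment property: |S_L − S_{L−1}| ≤ 1/N. -/
lemma facnn_aux_max (a t : ℝ) (ha : 0 ≤ a) (ht : |t| ≤ 1) :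
    |max 0 (a + t) - a| ≤ 1 := by
  rcases le_or_gt (a + t) 0 with h | h
  · rw [max_eq_left h, zero_sub, abs_neg, abs_of_nonneg ha]
    have := (abs_le.1 ht).1
    linarith
  · rw [max_eq_right h.le]
    have : a + t - a = t := by ring
    rw [this]; exact ht

/-- Theorem 2, bounded increment through depth:
With the dampened skip connection `X_L = ReLU((1 − 1/L)·X_{L−1} + (1/L)·tanh(f_L))`
and rescaled features `S_0 = 0`, `S_L = (L/N)·X_L`, for every `1 ≤ L ≤ N` we have
`|S_L − S_{L−1}| ≤ 1/N`. -/
theorem facnn_bounded_increment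
    (N : ℕ) (hN : 1 ≤ N) (f : ℕ → ℝ) (X S : ℕ → ℝ)
    (hX : ∀ L, 1 ≤ L → L ≤ N →
      X L = max 0 ((1 - 1 / (L : ℝ)) * X (L - 1)
        + (1 / (L : ℝ)) * Real.tanh (f L)))
    (hS0 : S 0 = 0)
    (hS : ∀ L, 1 ≤ L → L ≤ N → S L = ((L : ℝ) / (N : ℝ)) * X L) :
    ∀ L, 1 ≤ L → L ≤ N → |S L - S (L - 1)| ≤ 1 / (N : ℝ) := by
  have hNpos : (0:ℝ) < N := by exact_mod_cast hN
  have htanh : ∀ x : ℝ, |Real.tanh x| ≤ 1 := by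
    intro x
    have hc := Real.cosh_pos x
    have hsq := Real.cosh_sq x
    rw [Real.tanh_eq_sinh_div_cosh, abs_div, abs_of_pos hc, div_le_one hc]
    rw [abs_le]
    constructor <;> nlinarith [sq_abs (Real.sinh x), abs_nonneg (Real.sinh x)]
  have hXb : ∀ L, 1 ≤ L → L ≤ N → 0 ≤ X L ∧ X L ≤ 1 := by
    intro L
    induction L with
    | zero => intro h; omega
    | succ n ih =>
      intro _ hle
      rw [hX (n+1) (by omega) hle]
      refine ⟨le_max_left _ _, max_le (by norm_num) ?_⟩
      have ht' : Real.tanh (f (n+1)) ≤ 1 := (abs_le.1 (htanh (f (n+1)))).2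
      push_cast
      rcases Nat.eq_zero_or_pos n with h0 | hn
      · subst h0; norm_num; linarith
      · have hx := ih hn (by omega)
        have hnpos : (0:ℝ) < (n:ℝ) + 1 := by positivity
        have h1 : (1:ℝ)/((n:ℝ)+1) ≤ 1 := by
          rw [div_le_one hnpos]
          have : (0:ℝ) ≤ (n:ℝ) := Nat.cast_nonneg n
          linarith
        have h1pos : (0:ℝ) < 1/((n:ℝ)+1) := by positivity
        nlinarith [hx.1, hx.2]
  intro L hL hLN
  rcases Nat.lt_or_ge L 2 with h2 | h2
  · interval_cases L
    rw [hS 1 le_rfl hLN, hS0, sub_zero]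
    have hx := hXb 1 le_rfl hLN
    rw [abs_of_nonneg (mul_nonneg (by positivity) hx.1)]
    push_cast
    have := mul_le_mul_of_nonneg_left hx.2 (le_of_lt (one_div_pos.2 hNpos))
    calc (1:ℝ)/N * X 1 ≤ 1/N * 1 := this
      _ = 1/N := mul_one _
  · have hn1 : 1 ≤ L - 1 := by omega
    have hnN : L - 1 ≤ N := by omega
    have hxn := hXb (L-1) hn1 hnN
    have hL2 : (2:ℝ) ≤ (L:ℝ) := by exact_mod_cast h2
    have hLpos : (0:ℝ) < L := by linarith
    have hcast : ((L - 1 : ℕ) : ℝ) = (L:ℝ) - 1 := by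
      have := Nat.cast_sub hL (R := ℝ)
      simpa using this
    set a : ℝ := ((L:ℝ)-1) * X (L-1) with ha
    set t : ℝ := Real.tanh (f L) with htdef
    have hanneg : 0 ≤ a := mul_nonneg (by linarith) hxn.1
    rw [hS L hL hLN, hS (L-1) hn1 hnN, hX L hL hLN, hcast]
    have key : ((L:ℝ)/N) * max 0 ((1 - 1/(L:ℝ)) * X (L-1) + (1/(L:ℝ)) * t)
        - (((L:ℝ)-1)/N) * X (L-1) = (1/(N:ℝ)) * (max 0 (a + t) - a) := by
      rw [mul_max_of_nonneg _ _ (le_of_lt (div_pos hLpos hNpos)), mul_zero]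
      have e1 : (L:ℝ)/N * ((1 - 1/(L:ℝ)) * X (L-1) + (1/(L:ℝ)) * t)
          = (1/(N:ℝ)) * (a + t) := by
        field_simp
        ring
      rw [e1, mul_sub, mul_max_of_nonneg _ _ (le_of_lt (one_div_pos.2 hNpos)),
        mul_zero]
      rw [ha]
      ring
    rw [key, abs_mul, abs_of_nonneg (le_of_lt (one_div_pos.2 hNpos))]
    have := facnn_aux_max a t hanneg (htanh (f L))
    calc (1:ℝ)/N * |max 0 (a+t) - a| ≤ 1/N * 1 :=
          mul_le_mul_of_nonneg_left this (le_of_lt (one_div_pos.2 hNpos))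
      _ = 1/N := mul_one _
end

section
/- For all natural numbers L, M with 0 ≤ L ≤ M ≤ N, the rescaled features satisfy the telescoped bound |S_M − S_L| ≤ (M − L)/N; in particular, features morph from S_0 = 0 to the penultimate rescaled feature S_N by increments that accumulate at most linearly in depth. -/
lemma abs_tanh_le_one (x : ℝ) : |Real.tanh x| ≤ 1 := by
  rw [Real.tanh_eq_sinh_div_cosh, abs_div, abs_of_pos (Real.cosh_pos x),
    div_le_one (Real.cosh_pos x)]
  rcases abs_cases (Real.sinh x) with ⟨h, _⟩ | ⟨h, _⟩
  · rw [h]; exact (Real.sinh_lt_cosh x).le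
  · rw [h]
    have := Real.sinh_lt_cosh (-x)
    rw [Real.sinh_neg, Real.cosh_neg] at this
    exact this.le

/-- telescoped bounded increment:
With the dampened skip connection `X_L = ReLU((1 − 1/L)·X_{L−1} + (1/L)·tanh(f_L))`
and rescaled features `S_0 = 0`, `S_L = (L/N)·X_L`, for all `0 ≤ L ≤ M ≤ N` we have
`|S_M − S_L| ≤ (M − L)/N`. -/
theorem facnn_telescoped_bound
    (N : ℕ) (hN : 1 ≤ N) (f : ℕ → ℝ) (X S : ℕ → ℝ)
    (hX : ∀ L, 1 ≤ L → L ≤ N →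
      X L = max 0 ((1 - 1 / (L : ℝ)) * X (L - 1)
        + (1 / (L : ℝ)) * Real.tanh (f L)))
    (hS0 : S 0 = 0)
    (hS : ∀ L, 1 ≤ L → L ≤ N → S L = ((L : ℝ) / (N : ℝ)) * X L) :
    ∀ L M, L ≤ M → M ≤ N →
      |S M - S L| ≤ ((M : ℝ) - (L : ℝ)) / (N : ℝ) := by
  have hNpos : (0 : ℝ) < N := by exact_mod_cast hN
  -- rescaled form: S k = (k * X k) / N for all k ≤ N (using 0 * X 0 = 0)
  have hSY : ∀ k, k ≤ N → S k = (k : ℝ) * X k / N := by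
    intro k hk
    rcases Nat.eq_zero_or_pos k with rfl | hk1
    · simp [hS0]
    · rw [hS k hk1 hk]; ring
  -- key recurrence for Y k = k * X k
  have hY : ∀ k, 1 ≤ k → k ≤ N →
      (k : ℝ) * X k = max 0 (((k - 1 : ℕ) : ℝ) * X (k - 1) + Real.tanh (f k)) := by
    intro k hk1 hk
    have hkpos : (0 : ℝ) < k := by exact_mod_cast hk1
    rw [hX k hk1 hk]
    have hcast : ((k - 1 : ℕ) : ℝ) = (k : ℝ) - 1 := by
      push_cast [Nat.cast_sub hk1]; ring
    rw [hcast, mul_max_of_nonneg _ _ hkpos.le, mul_zero]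
    congr 1
    field_simp
  -- nonnegativity of Y k for k ≤ N
  have hYnn : ∀ k, k ≤ N → 0 ≤ (k : ℝ) * X k := by
    intro k hk
    rcases Nat.eq_zero_or_pos k with rfl | hk1
    · simp
    · rw [hY k hk1 hk]; exact le_max_left _ _
  -- one-step bound
  have hstep : ∀ k, 1 ≤ k → k ≤ N →
      |(k : ℝ) * X k - ((k - 1 : ℕ) : ℝ) * X (k - 1)| ≤ 1 := by
    intro k hk1 hk
    set a := ((k - 1 : ℕ) : ℝ) * X (k - 1) with ha
    have hann : 0 ≤ a := hYnn (k - 1) (le_trans (Nat.sub_le _ _) hk)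
    have ht : |Real.tanh (f k)| ≤ 1 := abs_tanh_le_one (f k)
    rw [hY k hk1 hk]
    rcases le_or_gt 0 (a + Real.tanh (f k)) with h | h
    · rw [max_eq_right h]
      simpa using ht
    · rw [max_eq_left h.le]
      rw [abs_sub_comm, sub_zero, abs_of_nonneg hann]
      have : a ≤ -Real.tanh (f k) := by linarith
      calc a ≤ -Real.tanh (f k) := this
        _ ≤ |Real.tanh (f k)| := neg_le_abs _
        _ ≤ 1 := ht
  intro L M hLM hMN
  induction M, hLM using Nat.le_induction with
  | base => simp
  | succ M hLM ih =>
    have hMN' : M ≤ N := le_trans (Nat.le_succ M) hMN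
    have ih' := ih hMN'
    have h1 : |S (M + 1) - S M| ≤ 1 / N := by
      rw [hSY (M + 1) hMN, hSY M hMN']
      rw [div_sub_div_same, abs_div, abs_of_pos hNpos, div_le_div_iff_of_pos_right hNpos]
      have := hstep (M + 1) (Nat.le_add_left 1 M) hMN
      simpa using this
    calc |S (M + 1) - S L| ≤ |S (M + 1) - S M| + |S M - S L| := abs_sub_le _ _ _
      _ ≤ 1 / N + ((M : ℝ) - L) / N := add_le_add h1 ih'
      _ = (((M + 1 : ℕ) : ℝ) - L) / N := by push_cast; ring
end
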